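/- The diversity order of the CORS scheme, d = −lim_{γ→∞} log P_out(γ)/log γ, equals |φ| where φ = {i : D_max − LK/f_i > 0}; in particular d_CORS ≤ N, with equality iff every relay satisfies f_i > LK/D_max. -/

import Mathlib

open Filter Real

private lemma tendA (a : ℝ) (ha : 0 < a) :
    Tendsto (fun γ : ℝ => Real.log (1 - Real.exp (-(a) / γ)) + Real.log γ) atTop
      (nhds (Real.log a)) := by
  have hd : HasDerivAt (fun x : ℝ => 1 - Real.exp (-x)) 1 0 := by
    have h1 : HasDerivAt (fun x : ℝ => Real.exp (-x)) (-1) 0 := by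
      simpa [Function.comp_def] using (Real.hasDerivAt_exp (-0)).comp 0 (hasDerivAt_neg 0)
    simpa using (h1.const_sub 1)
  have hslope : Tendsto (fun x : ℝ => (1 - Real.exp (-x)) / x) (nhdsWithin 0 {0}ᶜ)
      (nhds 1) := by
    have := hasDerivAt_iff_tendsto_slope.mp hd
    refine this.congr' ?_
    filter_upwards [self_mem_nhdsWithin] with x hx
    simp [slope_def_field, div_eq_div_iff]
  have hdiv : Tendsto (fun γ : ℝ => a / γ) atTop (nhdsWithin 0 {0}ᶜ) := by
    apply tendsto_nhdsWithin_of_tendsto_nhds_of_eventually_within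
    · exact tendsto_const_nhds.div_atTop tendsto_id
    · filter_upwards [eventually_gt_atTop 0] with γ hγ
      exact ne_of_gt (div_pos ha hγ)
  have T1 : Tendsto (fun γ : ℝ => (1 - Real.exp (-(a / γ))) / (a / γ)) atTop (nhds 1) :=
    hslope.comp hdiv
  have T2 : Tendsto (fun γ : ℝ => γ * (1 - Real.exp (-a / γ))) atTop (nhds a) := by
    have := T1.const_mul a
    rw [mul_one] at this
    refine this.congr' ?_
    filter_upwards [eventually_gt_atTop 0] with γ hγ
    have ha' : a ≠ 0 := ne_of_gt ha
    have hγ' : γ ≠ 0 := ne_of_gt hγ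
    rw [neg_div]
    field_simp
  have T3 : Tendsto (fun γ : ℝ => Real.log (γ * (1 - Real.exp (-a / γ)))) atTop
      (nhds (Real.log a)) :=
    ((Real.continuousAt_log (ne_of_gt ha)).tendsto.comp T2)
  refine T3.congr' ?_
  filter_upwards [eventually_gt_atTop 0] with γ hγ
  have hpos : 0 < 1 - Real.exp (-a / γ) := by
    have : (-a) / γ < 0 := by
      rw [neg_div]; exact neg_neg_iff_pos.mpr (div_pos ha hγ)
    linarith [Real.exp_lt_one_iff.mpr this]
  rw [Real.log_mul (ne_of_gt hγ) (ne_of_gt hpos)]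
  ring

theorem stmt_16 (N : ℕ) (L ρ K W Dmax : ℝ)
    (hL : 0 < L) (hρ : 0 ≤ ρ) (hK : 0 < K) (hW : 0 < W) (hD : 0 < Dmax)
    (f : Fin N → ℝ) (hf : ∀ i, 0 < f i) (β : Fin N → ℝ) (hβ : ∀ i, 0 < β i)
    (c : Fin N → ℝ)
    (hc : ∀ i, c i = (2 : ℝ) ^ ((L + ρ * L) / (W * (Dmax - L * K / f i))) - 1)
    (Pout : ℝ → ℝ)
    (hP : ∀ γ : ℝ, 0 < γ →
      Pout γ = ∏ i ∈ Finset.univ.filter (fun i => 0 < Dmax - L * K / f i),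
        (1 - Real.exp (-(c i) / γ) * Real.exp (-(c i * β i) / γ))) :
    Filter.Tendsto (fun γ : ℝ => -(Real.log (Pout γ) / Real.log γ)) Filter.atTop
      (nhds ((Finset.univ.filter (fun i : Fin N => 0 < Dmax - L * K / f i)).card : ℝ)) ∧
    (Finset.univ.filter (fun i : Fin N => 0 < Dmax - L * K / f i)).card ≤ N ∧
    ((Finset.univ.filter (fun i : Fin N => 0 < Dmax - L * K / f i)).card = N
      ↔ ∀ i, L * K / Dmax < f i) := by
  set S := Finset.univ.filter (fun i : Fin N => 0 < Dmax - L * K / f i) with hS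
  set a : Fin N → ℝ := fun i => c i + c i * β i with ha
  have hcpos : ∀ i ∈ S, 0 < c i := by
    intro i hi
    have hcond : 0 < Dmax - L * K / f i := (Finset.mem_filter.mp hi).2
    have he : 0 < (L + ρ * L) / (W * (Dmax - L * K / f i)) := by
      apply div_pos
      · nlinarith
      · exact mul_pos hW hcond
    have : (1 : ℝ) < (2 : ℝ) ^ ((L + ρ * L) / (W * (Dmax - L * K / f i))) := by
      rw [Real.one_lt_rpow_iff_of_pos (by norm_num)]
      exact Or.inl ⟨one_lt_two, he⟩
    rw [hc i]; linarith
  have hapos : ∀ i ∈ S, 0 < a i := fun i hi =>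
    add_pos (hcpos i hi) (mul_pos (hcpos i hi) (hβ i))
  have hC : Tendsto (fun γ : ℝ => ∑ i ∈ S,
      (Real.log (1 - Real.exp (-(a i) / γ)) + Real.log γ)) atTop
      (nhds (∑ i ∈ S, Real.log (a i))) :=
    tendsto_finset_sum _ (fun i hi => tendA (a i) (hapos i hi))
  have hdiv0 : Tendsto (fun γ : ℝ => (∑ i ∈ S,
      (Real.log (1 - Real.exp (-(a i) / γ)) + Real.log γ)) / Real.log γ) atTop (nhds 0) :=
    hC.div_atTop Real.tendsto_log_atTop
  have hmain : Tendsto (fun γ : ℝ => -(Real.log (Pout γ) / Real.log γ)) atTop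
      (nhds (S.card : ℝ)) := by
    have T : Tendsto (fun γ : ℝ => (S.card : ℝ) - (∑ i ∈ S,
        (Real.log (1 - Real.exp (-(a i) / γ)) + Real.log γ)) / Real.log γ) atTop
        (nhds (S.card : ℝ)) := by
      simpa using tendsto_const_nhds.sub hdiv0
    refine T.congr' ?_
    filter_upwards [eventually_gt_atTop 1] with γ hγ
    have hγ0 : 0 < γ := lt_trans one_pos hγ
    have hlogγ : Real.log γ ≠ 0 := ne_of_gt (Real.log_pos hγ)
    have hterm : ∀ i ∈ S, (1 - Real.exp (-(c i) / γ) * Real.exp (-(c i * β i) / γ))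
        = 1 - Real.exp (-(a i) / γ) := by
      intro i _
      rw [← Real.exp_add]
      congr 1
      simp only [ha]
      ring
    have hpos : ∀ i ∈ S, 0 < 1 - Real.exp (-(a i) / γ) := by
      intro i hi
      have : (-(a i)) / γ < 0 := by
        rw [neg_div]; exact neg_neg_iff_pos.mpr (div_pos (hapos i hi) hγ0)
      linarith [Real.exp_lt_one_iff.mpr this]
    have hlogP : Real.log (Pout γ) = ∑ i ∈ S, Real.log (1 - Real.exp (-(a i) / γ)) := by
      rw [hP γ hγ0, Finset.prod_congr rfl hterm]
      exact Real.log_prod (fun i hi => ne_of_gt (hpos i hi))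
    have hsum : ∑ i ∈ S, (Real.log (1 - Real.exp (-(a i) / γ)) + Real.log γ)
        = Real.log (Pout γ) + (S.card : ℝ) * Real.log γ := by
      rw [Finset.sum_add_distrib, Finset.sum_const, hlogP, nsmul_eq_mul]
    rw [hsum]
    field_simp
    ring
  refine ⟨hmain, ?_, ?_⟩
  · exact (Finset.card_filter_le _ _).trans (le_of_eq (by simp))
  · have hcond : ∀ i : Fin N, (0 < Dmax - L * K / f i) ↔ L * K / Dmax < f i := by
      intro i
      rw [sub_pos, div_lt_iff₀ (hf i), div_lt_iff₀ hD]
      constructor <;> intro h <;> linarith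
    constructor
    · intro h i
      have : S = Finset.univ := Finset.eq_univ_of_card S (by simpa using h)
      have hi : i ∈ S := this ▸ Finset.mem_univ i
      exact (hcond i).mp (Finset.mem_filter.mp hi).2
    · intro h
      have : S = Finset.univ := by
        apply Finset.eq_univ_iff_forall.mpr
        intro i
        exact Finset.mem_filter.mpr ⟨Finset.mem_univ i, (hcond i).mpr (h i)⟩
      rw [this]
      simp
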